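/- Let q = 2^m with m odd, m > 1, and m not divisible by 5. There is no integer d with 1 ≤ d ≤ q^2−2 and gcd(d, q^2−1) = 1 such that the multisets {11, 4q+7, 10q+1} and {9d, (6q+3)d, (8q+1)d} coincide modulo q^2−1. -/
import Mathlib

private lemma aux_dvd (q N c : ℕ) (hq : 8 ≤ q) (hN : N = q ^ 2 - 1) (hc : 0 < c)
    (h : c * q ≡ c [MOD N]) : q + 1 ∣ c := by
  obtain ⟨a, rfl⟩ : ∃ a, q = a + 1 := ⟨q - 1, by omega⟩
  have h1 : N ∣ c * (a + 1) - c := (Nat.modEq_iff_dvd' (Nat.le_mul_of_pos_right c (by omega))).mp h.symm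
  have h2 : c * (a + 1) - c = a * c := by
    have : c * (a + 1) = a * c + c := by ring
    omega
  have hfac : N = a * (a + 2) := by
    have : (a + 1) ^ 2 = a * (a + 2) + 1 := by ring
    omega
  rw [h2, hfac] at h1
  have := Nat.dvd_of_mul_dvd_mul_left (show 0 < a by omega) h1
  simpa [Nat.add_assoc] using this

theorem stmt_11 (m q : ℕ) (hm : Odd m) (hm1 : 1 < m) (hm5 : ¬ (5 ∣ m))
    (hq : q = 2 ^ m) :
    ¬ ∃ d : ℕ, 1 ≤ d ∧ d ≤ q ^ 2 - 2 ∧ Nat.gcd d (q ^ 2 - 1) = 1 ∧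
      Multiset.map (· % (q ^ 2 - 1)) ({11, 4 * q + 7, 10 * q + 1} : Multiset ℕ) =
        Multiset.map (· % (q ^ 2 - 1))
          ({9 * d, (6 * q + 3) * d, (8 * q + 1) * d} : Multiset ℕ) := by
  rintro ⟨d, hd1, hd2, hgcd, hmset⟩
  have hm3 : 3 ≤ m := by rcases hm with ⟨k, hk⟩; omega
  have hq8 : 8 ≤ q := by
    subst hq
    calc (8:ℕ) = 2 ^ 3 := rfl
    _ ≤ 2 ^ m := Nat.pow_le_pow_right (by norm_num) hm3
  have hqq : q ^ 2 = (q ^ 2 - 1) + 1 := by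
    have h1 : 8 * 8 ≤ q * q := Nat.mul_le_mul hq8 hq8
    have h2 : q ^ 2 = q * q := sq q
    omega
  have hN63 : 63 ≤ q ^ 2 - 1 := by
    have h1 : 8 * 8 ≤ q * q := Nat.mul_le_mul hq8 hq8
    have h2 : q ^ 2 = q * q := sq q
    omega
  have h3N : 3 ∣ q ^ 2 - 1 := by
    have h4 : q ^ 2 = 4 ^ m := by
      subst hq; rw [← pow_mul, pow_mul']; norm_num
    have h4m : 4 ^ m % 3 = 1 := by rw [Nat.pow_mod]; norm_num
    omega
  -- multiset equality in ZMod (q^2-1)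
  have hmap : Multiset.map (fun x : ℕ => (x : ZMod (q^2-1))) {11, 4*q+7, 10*q+1} =
      Multiset.map (fun x : ℕ => (x : ZMod (q^2-1))) {9*d, (6*q+3)*d, (8*q+1)*d} := by
    have h := congrArg (Multiset.map (fun x : ℕ => (x : ZMod (q^2-1)))) hmset
    rw [Multiset.map_map, Multiset.map_map] at h
    simpa [Function.comp, ZMod.natCast_mod] using h
  simp only [Multiset.insert_eq_cons, Multiset.map_cons, Multiset.map_singleton] at hmap
  -- 11 must match (8q+1)d
  have h11mem : ((11:ℕ):ZMod (q^2-1)) = ((9*d:ℕ):ZMod (q^2-1)) ∨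
      ((11:ℕ):ZMod (q^2-1)) = (((6*q+3)*d:ℕ):ZMod (q^2-1)) ∨
      ((11:ℕ):ZMod (q^2-1)) = (((8*q+1)*d:ℕ):ZMod (q^2-1)) := by
    have hmem : ((11:ℕ):ZMod (q^2-1)) ∈
        ((((9*d:ℕ)):ZMod (q^2-1)) ::ₘ (((6*q+3)*d:ℕ):ZMod (q^2-1)) ::ₘ {(((8*q+1)*d:ℕ):ZMod (q^2-1))}) := by
      rw [← hmap]; simp
    simpa using hmem
  have h11 : (11:ℕ) ≡ (8*q+1)*d [MOD q^2-1] := by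
    rcases h11mem with h | h | h
    · exfalso
      have h3 : 11 % 3 = (9*d) % 3 :=
        Nat.ModEq.of_dvd h3N ((ZMod.natCast_eq_natCast_iff _ _ _).mp h)
      omega
    · exfalso
      have h3 : 11 % 3 = ((6*q+3)*d) % 3 :=
        Nat.ModEq.of_dvd h3N ((ZMod.natCast_eq_natCast_iff _ _ _).mp h)
      have hdvd : 3 ∣ (6*q+3)*d := Dvd.dvd.mul_right ⟨2*q+1, by ring⟩ d
      omega
    · exact (ZMod.natCast_eq_natCast_iff _ _ _).mp h
  have h11' : (((8*q+1)*d:ℕ):ZMod (q^2-1)) = ((11:ℕ):ZMod (q^2-1)) :=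
    (ZMod.natCast_eq_natCast_iff _ _ _).mpr h11.symm
  -- 4q+7 must match 9d or (6q+3)d
  have h47mem : ((4*q+7:ℕ):ZMod (q^2-1)) = ((9*d:ℕ):ZMod (q^2-1)) ∨
      ((4*q+7:ℕ):ZMod (q^2-1)) = (((6*q+3)*d:ℕ):ZMod (q^2-1)) ∨
      ((4*q+7:ℕ):ZMod (q^2-1)) = (((8*q+1)*d:ℕ):ZMod (q^2-1)) := by
    have hmem : ((4*q+7:ℕ):ZMod (q^2-1)) ∈
        ((((9*d:ℕ)):ZMod (q^2-1)) ::ₘ (((6*q+3)*d:ℕ):ZMod (q^2-1)) ::ₘ {(((8*q+1)*d:ℕ):ZMod (q^2-1))}) := by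
      rw [← hmap]; simp
    simpa using hmem
  -- sum equality
  have hsum := congrArg Multiset.sum hmap
  simp only [Multiset.sum_cons, Multiset.sum_singleton] at hsum
  push_cast at hsum
  have hQ2 : ((q:ZMod (q^2-1)))^2 = 1 := by
    have h : ((q^2 : ℕ) : ZMod (q^2-1)) = (((q^2-1) + 1 : ℕ) : ZMod (q^2-1)) := by rw [← hqq]
    push_cast at h
    simpa [ZMod.natCast_self] using h
  have e2 : (8*(q:ZMod (q^2-1))+1) * d = 11 := by
    push_cast at h11'; linear_combination h11'
  rcases h47mem with hA | hB | hC
  · -- Case A : 9d ≡ 4q+7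
    have e1 : (9 : ZMod (q^2-1)) * d = 4*q+7 := by
      have h := hA.symm; push_cast at h; linear_combination h
    have e3 : (60 : ZMod (q^2-1)) * q = 60 := by
      have h : (9:ZMod (q^2-1)) * ((8*(q:ZMod (q^2-1))+1)*d) = (8*(q:ZMod (q^2-1))+1) * ((9:ZMod (q^2-1))*d) := by ring
      rw [e1, e2] at h
      have hexp : (8*(q:ZMod (q^2-1))+1) * (4*(q:ZMod (q^2-1))+7) = 32*((q:ZMod (q^2-1)))^2 + 60*q + 7 := by ring
      rw [hexp, hQ2] at h
      linear_combination -h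
    have e4 : (60*q : ℕ) ≡ 60 [MOD q^2-1] := by
      apply (ZMod.natCast_eq_natCast_iff _ _ _).mp
      push_cast
      linear_combination e3
    have hdvd : q + 1 ∣ 60 := aux_dvd q _ 60 hq8 rfl (by norm_num) e4
    have hle : q + 1 ≤ 60 := Nat.le_of_dvd (by norm_num) hdvd
    have hm6 : m < 6 := by
      by_contra hcon
      have : 2^6 ≤ 2^m := Nat.pow_le_pow_right (by norm_num) (by omega)
      omega
    interval_cases m
    · rw [hq] at hdvd; norm_num at hdvd
    · exact absurd hm (by decide)
    · exact hm5 (by norm_num)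
  · -- Case B : (6q+3)d ≡ 4q+7, so 9d ≡ 10q+1 from the sum
    have eB : (6*(q:ZMod (q^2-1))+3) * d = 4*q+7 := by
      have h := hB.symm; push_cast at h; linear_combination h
    have e1 : (9 : ZMod (q^2-1)) * d = 10*q+1 := by
      linear_combination -hsum - eB - e2
    have e3 : (18 : ZMod (q^2-1)) * q = 18 := by
      have h : (9:ZMod (q^2-1)) * ((8*(q:ZMod (q^2-1))+1)*d) = (8*(q:ZMod (q^2-1))+1) * ((9:ZMod (q^2-1))*d) := by ring
      rw [e1, e2] at h
      have hexp : (8*(q:ZMod (q^2-1))+1) * (10*(q:ZMod (q^2-1))+1) = 80*((q:ZMod (q^2-1)))^2 + 18*q + 1 := by ring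
      rw [hexp, hQ2] at h
      linear_combination -h
    have e4 : (18*q : ℕ) ≡ 18 [MOD q^2-1] := by
      apply (ZMod.natCast_eq_natCast_iff _ _ _).mp
      push_cast
      linear_combination e3
    have hdvd : q + 1 ∣ 18 := aux_dvd q _ 18 hq8 rfl (by norm_num) e4
    have hle : q + 1 ≤ 18 := Nat.le_of_dvd (by norm_num) hdvd
    have hmeq : m = 3 := by
      have hm5' : m < 5 := by
        by_contra hcon
        have : 2^5 ≤ 2^m := Nat.pow_le_pow_right (by norm_num) (by omega)
        omega
      interval_cases m
      · rfl
      · exact absurd hm (by decide)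
    subst hmeq
    rw [show (2:ℕ)^3 = 8 from rfl] at hq
    subst hq
    -- now q = 8, modulus 63 : concrete contradiction
    have cB : (4*8+7 : ℕ) ≡ (6*8+3)*d [MOD 8^2-1] := (ZMod.natCast_eq_natCast_iff _ _ _).mp hB
    have c1 : 11 % 63 = (65*d) % 63 := h11
    have c2 : 39 % 63 = (51*d) % 63 := cB
    omega
  · -- 4q+7 ≡ 11 mod N : impossible by size
    have h : (4*q+7:ℕ) ≡ 11 [MOD q^2-1] :=
      (ZMod.natCast_eq_natCast_iff _ _ _).mp (hC.trans h11')
    have hdvd : q^2-1 ∣ (4*q+7) - 11 := (Nat.modEq_iff_dvd' (by omega)).mp h.symm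
    have hlt : 4*q + 7 - 11 < q^2-1 := by
      have h1 : 8 * q ≤ q * q := Nat.mul_le_mul_right q hq8
      have h2 : q ^ 2 = q * q := sq q
      omega
    have hpos : 0 < 4*q+7-11 := by omega
    have := Nat.le_of_dvd hpos hdvd
    omega
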